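/- Let n ≥ 2 and r be natural numbers with 2 ≤ r ≤ n, let b be a real number with b > log₂ e, and let t be a natural number with t ≥ b·n·log n. If Z is a binomial random variable with t trials and success probability 1/n, then Pr[Z < log₂ r] ≤ n^(−(1 − (log₂ e)/b)²·b/2). -/

import Mathlib

open scoped ENNReal

/-- The binomial `PMF` with an `ℝ≥0∞`-valued parameter, as `PMF.binomial` was defined in the
older Mathlib. -/
noncomputable def binomialENNReal (p : ℝ≥0∞) (h : p ≤ 1) (n : ℕ) : PMF (Fin (n + 1)) :=
  .ofFintype (fun i => p ^ (i : ℕ) * (1 - p) ^ ((Fin.last n - i) : ℕ) * (n.choose i : ℕ)) (by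
    convert (add_pow p (1 - p) n).symm
    · rw [Finset.sum_fin_eq_sum_range]
      apply Finset.sum_congr rfl
      intro i hi
      rw [Finset.mem_range] at hi
      rw [dif_pos hi, Fin.last]
    · simp [h])

private lemma exp_neg_le_quad {x : ℝ} (hx : 0 ≤ x) :
    Real.exp (-x) ≤ 1 - x + x ^ 2 / 2 := by
  have h1 : 1 + x + x ^ 2 / 2 ≤ Real.exp x := Real.quadratic_le_exp_of_nonneg hx
  have h2 : (0:ℝ) ≤ 1 - x + x ^ 2 / 2 := by nlinarith
  rw [Real.exp_neg, inv_le_iff_one_le_mul₀ (Real.exp_pos x)]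
  nlinarith [mul_le_mul_of_nonneg_left h1 h2, sq_nonneg (x * x), sq_nonneg x]

/-- Chernoff-bound core of deputy election: if `Z ~ Bin(t, 1/n)` with `t ≥ b·n·log n`
and `b > log₂ e`, then `Pr[Z < log₂ r] ≤ n^(−(1 − (log₂ e)/b)²·b/2)`. -/
theorem deputy_election_chernoff (n r t : ℕ) (b : ℝ) (hn : 2 ≤ n) (hr : 2 ≤ r)
    (hrn : r ≤ n) (hb : Real.logb 2 (Real.exp 1) < b)
    (ht : b * n * Real.log n ≤ t)
    (hp : (1 : ℝ≥0∞) / n ≤ 1) :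
    (binomialENNReal (1 / n) hp t).toMeasure {k : Fin (t + 1) | (k : ℝ) < Real.logb 2 r} ≤
      ENNReal.ofReal ((n : ℝ) ^ (-(1 - Real.logb 2 (Real.exp 1) / b) ^ 2 * b / 2)) := by
  classical
  set c : ℝ := Real.logb 2 (Real.exp 1) with hc
  set a : ℝ := Real.logb 2 r with ha
  set s : ℝ := 1 - c / b with hs
  -- basic positivity facts
  have hn0 : (0 : ℝ) < n := by positivity
  have hnR : (2 : ℝ) ≤ n := by exact_mod_cast hn
  have hlog2 : (0 : ℝ) < Real.log 2 := Real.log_pos (by norm_num)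
  have hcval : c = 1 / Real.log 2 := by
    rw [hc, Real.logb, Real.log_exp, one_div]
  have hc0 : 0 < c := by rw [hcval]; positivity
  have hb0 : 0 < b := hc0.trans hb
  have hs0 : 0 < s := by
    rw [hs]
    have : c / b < 1 := (div_lt_one hb0).2 hb
    linarith
  have hs1 : s < 1 := by
    rw [hs]
    have : 0 < c / b := by positivity
    linarith
  have hL0 : 0 < Real.log n := Real.log_pos (by exact_mod_cast (by omega : 1 < n))
  -- real parameters
  set p : ℝ := 1 / n with hpdef
  set q : ℝ := 1 - p with hqdef
  have hp0 : 0 < p := by positivity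
  have hp1 : p ≤ 1 / 2 := by
    rw [hpdef]
    apply div_le_div_of_nonneg_left (by norm_num) (by norm_num) hnR
  have hq0 : 0 ≤ q := by rw [hqdef]; linarith
  -- the ENNReal probability parameter is ofReal p
  have hpe : (1 / (n : ℝ≥0∞)) = ENNReal.ofReal p := by
    rw [hpdef, ENNReal.ofReal_div_of_pos hn0, ENNReal.ofReal_one, ENNReal.ofReal_natCast]
  have hqe : (1 - ENNReal.ofReal p) = ENNReal.ofReal q := by
    rw [hqdef, ENNReal.ofReal_sub _ hp0.le, ENNReal.ofReal_one]
  -- the real-valued weight function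
  set g : ℕ → ℝ := fun k => (p ^ k * q ^ (t - k) * (t.choose k : ℝ)) * Real.exp (s * (a - k))
    with hg
  have hgnn : ∀ k, 0 ≤ g k := by
    intro k
    rw [hg]
    positivity
  have ha0 : 0 < a := by
    rw [ha]
    apply Real.logb_pos (by norm_num)
    exact_mod_cast (by omega : 1 < r)
  -- Step 1: bound the measure by the exponential-weighted sum
  have step1 : (binomialENNReal (1 / n) hp t).toMeasure
      {k : Fin (t + 1) | (k : ℝ) < Real.logb 2 r}
      ≤ ∑ k : Fin (t + 1), ENNReal.ofReal (g k) := by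
    rw [PMF.toMeasure_apply_fintype]
    apply Finset.sum_le_sum
    intro k _
    rw [Set.indicator_apply]
    split_ifs with hk
    · rw [binomialENNReal, PMF.ofFintype_apply, hpe, hqe]
      rw [Fin.val_last]
      rw [← ENNReal.ofReal_pow hp0.le, ← ENNReal.ofReal_pow hq0,
        ← ENNReal.ofReal_mul (by positivity), ← ENNReal.ofReal_natCast (t.choose k),
        ← ENNReal.ofReal_mul (by positivity)]
      apply ENNReal.ofReal_le_ofReal
      rw [hg]
      simp only
      have hk' : ((k : ℕ) : ℝ) < a := hk
      have h1 : (1 : ℝ) ≤ Real.exp (s * (a - (k : ℕ))) := by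
        rw [Real.one_le_exp_iff]
        apply mul_nonneg hs0.le
        linarith
      exact le_mul_of_one_le_right (by positivity) h1
    · exact zero_le
  -- Step 2: sum of ofReal = ofReal of sum, and compute via the binomial theorem
  have step2 : ∑ k : Fin (t + 1), ENNReal.ofReal (g k)
      = ENNReal.ofReal (Real.exp (s * a) * (p * Real.exp (-s) + q) ^ t) := by
    have hsum := ENNReal.ofReal_sum_of_nonneg
      (s := (Finset.univ : Finset (Fin (t + 1)))) (f := fun k : Fin (t + 1) => g k)
      (fun i _ => hgnn i)
    rw [← hsum]
    congr 1
    rw [Fin.sum_univ_eq_sum_range (fun k => g k) (t + 1)]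
    rw [add_pow, Finset.mul_sum]
    apply Finset.sum_congr rfl
    intro k hk
    rw [hg]
    simp only
    rw [mul_pow]
    have hE : Real.exp (s * (a - (k : ℝ))) = Real.exp (s * a) * Real.exp (-s) ^ k := by
      rw [← Real.exp_nat_mul, ← Real.exp_add]
      congr 1
      ring
    rw [hE]
    ring
  -- Step 3: bound the base by an exponential
  have step3 : (p * Real.exp (-s) + q) ^ t ≤ Real.exp (t * (p * (Real.exp (-s) - 1))) := by
    have hbase : p * Real.exp (-s) + q ≤ Real.exp (p * (Real.exp (-s) - 1)) := by
      have heq : p * Real.exp (-s) + q = p * (Real.exp (-s) - 1) + 1 := by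
        rw [hqdef]; ring
      rw [heq]
      exact Real.add_one_le_exp _
    calc (p * Real.exp (-s) + q) ^ t ≤ (Real.exp (p * (Real.exp (-s) - 1))) ^ t := by
          apply pow_le_pow_left₀ (by positivity) hbase
      _ = Real.exp (t * (p * (Real.exp (-s) - 1))) := by rw [← Real.exp_nat_mul]
  -- Step 4: the scalar inequality
  have key : s * a + t * (p * (Real.exp (-s) - 1)) ≤ (-s ^ 2 * b / 2) * Real.log n := by
    clear_value g q p s a c
    have hae : a ≤ c * Real.log n := by
      have hcL : c * Real.log n = Real.log n / Real.log 2 := by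
        rw [hcval]; ring
      rw [ha, Real.logb, hcL]
      have hlr : Real.log r ≤ Real.log n :=
        (Real.log_le_log_iff (by positivity) (by positivity)).2 (by exact_mod_cast hrn)
      gcongr
    have htp : b * Real.log n ≤ t * p := by
      rw [hpdef, mul_one_div, le_div_iff₀ hn0]
      calc b * Real.log n * n = b * n * Real.log n := by ring
        _ ≤ t := ht
    have hexp1 : Real.exp (-s) - 1 ≤ -s + s ^ 2 / 2 := by
      have := exp_neg_le_quad (x := s) hs0.le
      linarith
    have hexps : Real.exp (-s) - 1 < 0 := by
      have : Real.exp (-s) < 1 := Real.exp_lt_one_iff.2 (by linarith)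
      linarith
    have h1 : t * (p * (Real.exp (-s) - 1)) ≤ b * Real.log n * (Real.exp (-s) - 1) := by
      rw [← mul_assoc]
      exact mul_le_mul_of_nonpos_right htp hexps.le
    have h2 : s * a ≤ s * (c * Real.log n) := mul_le_mul_of_nonneg_left hae hs0.le
    have hcb : c = b * (1 - s) := by
      rw [hs]
      field_simp
      ring
    have h3 : s * (c * Real.log n) + b * Real.log n * (Real.exp (-s) - 1)
        ≤ (-s ^ 2 * b / 2) * Real.log n := by
      rw [hcb]
      nlinarith [mul_le_mul_of_nonneg_left hexp1 (mul_nonneg hb0.le hL0.le)]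
    linarith [h1, h2, h3]
  -- assemble
  calc (binomialENNReal (1 / n) hp t).toMeasure {k : Fin (t + 1) | (k : ℝ) < Real.logb 2 r}
      ≤ ∑ k : Fin (t + 1), ENNReal.ofReal (g k) := step1
    _ = ENNReal.ofReal (Real.exp (s * a) * (p * Real.exp (-s) + q) ^ t) := step2
    _ ≤ ENNReal.ofReal ((n : ℝ) ^ (-s ^ 2 * b / 2)) := by
        apply ENNReal.ofReal_le_ofReal
        calc Real.exp (s * a) * (p * Real.exp (-s) + q) ^ t
            ≤ Real.exp (s * a) * Real.exp (t * (p * (Real.exp (-s) - 1))) :=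
              mul_le_mul_of_nonneg_left step3 (Real.exp_pos _).le
          _ = Real.exp (s * a + t * (p * (Real.exp (-s) - 1))) := by rw [← Real.exp_add]
          _ ≤ Real.exp ((-s ^ 2 * b / 2) * Real.log n) := Real.exp_le_exp.2 key
          _ = (n : ℝ) ^ (-s ^ 2 * b / 2) := by
              rw [Real.rpow_def_of_pos hn0, mul_comm]
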